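/- Suppose: L_n : Θ → ℝ is measurable, bounded below, lower semicontinuous, and coercive; 𝒬 ⊆ 𝒫(Θ) is closed in the weak* topology; D is lower semicontinuous in its first argument (with respect to the weak* topology); D(Q,Π) ≤ M for all Q ∈ 𝒬; there exists P_n^⋆ ∈ 𝒬 with J_{L_n}(P_n^⋆) ≤ J_{L_n}(Q) for all Q ∈ 𝒬; and some Q ∈ 𝒬 has T_n(Q) < ∞. Then there exists Q_n ∈ 𝒬 minimising T_n over 𝒬, i.e. a GVI posterior exists. -/

import Mathlib

open MeasureTheory Filter Topology
open scoped ENNReal NNReal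

/-- The loss functional `J_f(ν) := ∫ f dν`, valued in the extended reals; for `f`
bounded below it takes values in `(-∞, ∞]`. -/
noncomputable def J {Θ : Type*} [MeasurableSpace Θ] (f : Θ → ℝ) (ν : Measure Θ) : EReal :=
  ((∫⁻ θ, ENNReal.ofReal (f θ) ∂ν : ℝ≥0∞) : EReal) -
    ((∫⁻ θ, ENNReal.ofReal (-f θ) ∂ν : ℝ≥0∞) : EReal)

/-- The GVI objective `T n β L D Π Q := n · J_L(Q) + (1/β) · D(Q, Π)`. -/
noncomputable def T {Θ : Type*} [MeasurableSpace Θ] (n : ℕ) (β : ℝ) (L : Θ → ℝ)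
    (D : ProbabilityMeasure Θ → ProbabilityMeasure Θ → ℝ)
    (prior Q : ProbabilityMeasure Θ) : EReal :=
  ((n : ℝ) : EReal) * J L (Q : Measure Θ) + ((1 / β * D Q prior : ℝ) : EReal)

/-- `f : Θ → ℝ` is coercive if for every `c` there is a compact set outside of which `f > c`. -/
def Coercive {Θ : Type*} [TopologicalSpace Θ] (f : Θ → ℝ) : Prop :=
  ∀ c : ℝ, ∃ K : Set Θ, IsCompact K ∧ ∀ θ ∉ K, c < f θ

/-- The mixture `a·μ + (1−a)·ν` of two probability measures. -/
noncomputable def mix {Θ : Type*} [MeasurableSpace Θ] (μ ν : ProbabilityMeasure Θ) (a : ℝ)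
    (ha0 : 0 ≤ a) (ha1 : a ≤ 1) : ProbabilityMeasure Θ :=
  ⟨ENNReal.ofReal a • (μ : Measure Θ) + ENNReal.ofReal (1 - a) • (ν : Measure Θ), by
    constructor
    simp only [Measure.coe_add, Pi.add_apply, Measure.smul_apply, smul_eq_mul, measure_univ,
      mul_one]
    rw [← ENNReal.ofReal_add ha0 (by linarith)]
    norm_num⟩

/-- The Dirac probability measure at `θ`. -/
noncomputable def diracProb {Θ : Type*} [MeasurableSpace Θ] (θ : Θ) : ProbabilityMeasure Θ :=
  ⟨Measure.dirac θ, inferInstance⟩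

/-- `𝒬` allows for Dirac measures: it is weak*-closed and the infimum of `J_f` over `𝒬`
equals the infimum of `f` over `Θ`, for every bounded below, lsc, coercive `f`. -/
def AllowsDiracs {Θ : Type*} [MeasurableSpace Θ] [TopologicalSpace Θ] [OpensMeasurableSpace Θ]
    (𝒬 : Set (ProbabilityMeasure Θ)) : Prop :=
  IsClosed 𝒬 ∧ ∀ f : Θ → ℝ, (∃ b, ∀ θ, b ≤ f θ) → LowerSemicontinuous f → Coercive f →
    (⨅ ν : 𝒬, J f (ν.1 : Measure Θ)) = ((⨅ θ, f θ : ℝ) : EReal)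


section GVIAux

open Set TopologicalSpace

lemma GVI.tendsto_div_nat {a : ℝ≥0∞} (ha : a ≠ ⊤) :
    Tendsto (fun m : ℕ => a / ((m : ℝ≥0∞) + 1)) atTop (𝓝 0) := by
  have h1 : Tendsto (fun m : ℕ => ((m : ℝ≥0∞) + 1)⁻¹) atTop (𝓝 0) := by
    have := ENNReal.tendsto_inv_nat_nhds_zero.comp (tendsto_add_atTop_nat 1)
    convert this using 2 with m
    simp [Function.comp]
  have := ENNReal.Tendsto.const_mul (a := a) h1 (Or.inr ha)
  simpa [div_eq_mul_inv] using this

lemma GVI.lintegral_le_liminf_of_lsc {Θ : Type*} [MeasurableSpace Θ] [TopologicalSpace Θ]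
    [OpensMeasurableSpace Θ]
    {μ : Measure Θ} {μs : ℕ → Measure Θ} {f : Θ → ℝ} (f_meas : Measurable f)
    (f_lsc : LowerSemicontinuous f) (f_nn : 0 ≤ f)
    (h_opens : ∀ G, IsOpen G → μ G ≤ atTop.liminf (fun i => μs i G)) :
    ∫⁻ x, ENNReal.ofReal (f x) ∂μ ≤ atTop.liminf (fun i => ∫⁻ x, ENNReal.ofReal (f x) ∂(μs i)) := by
  simp_rw [lintegral_eq_lintegral_meas_lt _ (Eventually.of_forall f_nn) f_meas.aemeasurable]
  calc ∫⁻ t in Set.Ioi 0, μ {a | t < f a}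
      ≤ ∫⁻ t in Set.Ioi 0, atTop.liminf (fun i => μs i {a | t < f a}) :=
        lintegral_mono fun t => h_opens _ (f_lsc.isOpen_preimage t)
    _ ≤ atTop.liminf (fun i => ∫⁻ t in Set.Ioi 0, μs i {a | t < f a}) :=
        lintegral_liminf_le fun n => Antitone.measurable fun s t hst =>
          measure_mono fun ω hω => lt_of_le_of_lt hst hω

lemma GVI.lsc_le_liminf {X : Type*} [TopologicalSpace X] {g : X → ℝ≥0∞}
    (hg : LowerSemicontinuous g) {x : X} {y : ℕ → X} (hy : Tendsto y atTop (𝓝 x)) :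
    g x ≤ atTop.liminf (fun k => g (y k)) := by
  by_contra hlt
  push_neg at hlt
  obtain ⟨c, hc1, hc2⟩ := exists_between hlt
  have hev : ∀ᶠ k in atTop, c < g (y k) := hy.eventually (hg x c hc2)
  have : c ≤ atTop.liminf (fun k => g (y k)) :=
    le_liminf_of_le (by isBoundedDefault) (hev.mono fun k hk => hk.le)
  exact absurd this (not_le.mpr hc1)

lemma GVI.prokhorov_seq {Θ : Type*} [TopologicalSpace Θ] [PolishSpace Θ] [MeasurableSpace Θ]
    [BorelSpace Θ] (Q : ℕ → ProbabilityMeasure Θ) (K : ℕ → Set Θ) (hK : ∀ m, IsCompact (K m))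
    (ε : ℕ → ℝ≥0∞) (hε : Tendsto ε atTop (𝓝 0))
    (htight : ∀ k m, (Q k : Measure Θ) (K m)ᶜ ≤ ε m) :
    ∃ (P : ProbabilityMeasure Θ) (φ : ℕ → ℕ), StrictMono φ ∧
      Tendsto (fun k => Q (φ k)) atTop (𝓝 P) ∧
      ∀ G, IsOpen G → (P : Measure Θ) G ≤ atTop.liminf (fun k => (Q (φ k) : Measure Θ) G) := by
  classical
  -- enumeration of a countable basis
  have hcount : (insert ∅ (countableBasis Θ) : Set (Set Θ)).Countable :=
    (countable_countableBasis Θ).insert ∅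
  obtain ⟨e, he⟩ := hcount.exists_eq_range (insert_nonempty _ _)
  have he_open : ∀ i, IsOpen (e i) := by
    intro i
    have hmem : e i ∈ insert ∅ (countableBasis Θ) := by rw [he]; exact mem_range_self i
    rcases Set.mem_insert_iff.mp hmem with h | h
    · rw [h]; exact isOpen_empty
    · exact isOpen_of_mem_countableBasis h
  set u : Finset ℕ → Set Θ := fun F => ⋃ i ∈ F, e i with hu
  have hu_open : ∀ F, IsOpen (u F) := fun F => isOpen_biUnion (fun i _ => he_open i)
  have hu_union : ∀ F₁ F₂ : Finset ℕ, u (F₁ ∪ F₂) = u F₁ ∪ u F₂ := fun F₁ F₂ =>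
    Finset.set_biUnion_union F₁ F₂ e
  have key : ∀ (Kc : Set Θ), IsCompact Kc → ∀ (U : Set Θ), IsOpen U → Kc ⊆ U →
      ∃ F : Finset ℕ, Kc ⊆ u F ∧ u F ⊆ U := by
    intro Kc hKc U hU hKU
    have cover : Kc ⊆ ⋃ i : {i : ℕ // e i ⊆ U}, e i.1 := by
      intro x hx
      obtain ⟨v, hv, hxv, hvU⟩ :=
        (isBasis_countableBasis Θ).exists_subset_of_mem_open (hKU hx) hU
      have hmem : v ∈ insert ∅ (countableBasis Θ) := Set.mem_insert_of_mem _ hv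
      rw [he] at hmem
      obtain ⟨i, rfl⟩ := hmem
      exact Set.mem_iUnion.mpr ⟨⟨i, hvU⟩, hxv⟩
    obtain ⟨t, ht⟩ := hKc.elim_finite_subcover (fun i : {i : ℕ // e i ⊆ U} => e i.1)
      (fun i => he_open i.1) cover
    refine ⟨t.image Subtype.val, ?_, ?_⟩
    · intro x hx
      obtain ⟨i, hi, hxi⟩ := Set.mem_iUnion₂.mp (ht hx)
      exact Set.mem_biUnion (Finset.mem_coe.mpr (Finset.mem_image_of_mem Subtype.val hi)) hxi
    · intro x hx
      obtain ⟨j, hj, hxj⟩ := Set.mem_iUnion₂.mp hx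
      obtain ⟨i, hi, rfl⟩ := Finset.mem_image.mp (Finset.mem_coe.mp hj)
      exact i.2 hxj
  -- diagonal subsequence
  let Ψ : ℕ → (Finset ℕ → ℝ≥0∞) := fun k F => (Q k : Measure Θ) (u F)
  obtain ⟨α, φ, hφ, hΨ⟩ := CompactSpace.tendsto_subseq Ψ
  have hα : ∀ F, Tendsto (fun k => (Q (φ k) : Measure Θ) (u F)) atTop (𝓝 (α F)) :=
    fun F => tendsto_pi_nhds.mp hΨ F
  have hα1 : ∀ F, α F ≤ 1 := fun F =>
    le_of_tendsto (hα F) (Eventually.of_forall fun k => prob_le_one)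
  have hαmono : ∀ F₁ F₂, u F₁ ⊆ u F₂ → α F₁ ≤ α F₂ := fun F₁ F₂ h =>
    le_of_tendsto_of_tendsto' (hα F₁) (hα F₂) (fun k => measure_mono h)
  have hαsub : ∀ F₁ F₂, α (F₁ ∪ F₂) ≤ α F₁ + α F₂ := fun F₁ F₂ =>
    le_of_tendsto_of_tendsto' (hα (F₁ ∪ F₂)) ((hα F₁).add (hα F₂))
      (fun k => by rw [hu_union]; exact measure_union_le _ _)
  have hαadd : ∀ F₁ F₂, Disjoint (u F₁) (u F₂) → α (F₁ ∪ F₂) = α F₁ + α F₂ := by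
    intro F₁ F₂ hd
    refine tendsto_nhds_unique (hα (F₁ ∪ F₂)) ?_
    refine ((hα F₁).add (hα F₂)).congr fun k => ?_
    rw [hu_union]
    exact (measure_union hd (hu_open F₂).measurableSet).symm
  -- the content
  set lam : Compacts Θ → ℝ≥0∞ :=
    fun Kc => ⨅ (F : Finset ℕ) (_ : (Kc : Set Θ) ⊆ u F), α F with hlam
  have hlam_le : ∀ (Kc : Compacts Θ) (F : Finset ℕ), (Kc : Set Θ) ⊆ u F → lam Kc ≤ α F :=
    fun Kc F hF => iInf₂_le F hF
  have hlam_one : ∀ Kc, lam Kc ≤ 1 := by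
    intro Kc
    obtain ⟨F, hF, -⟩ := key Kc Kc.isCompact univ isOpen_univ (subset_univ _)
    exact (hlam_le Kc F hF).trans (hα1 F)
  have hlam_ne_top : ∀ Kc, lam Kc ≠ ⊤ :=
    fun Kc => ((hlam_one Kc).trans_lt ENNReal.one_lt_top).ne
  have hlam_mono : ∀ K₁ K₂ : Compacts Θ, (K₁ : Set Θ) ⊆ (K₂ : Set Θ) → lam K₁ ≤ lam K₂ :=
    fun K₁ K₂ h => le_iInf₂ fun F hF => hlam_le K₁ F (h.trans hF)
  have hlam_sup_le : ∀ K₁ K₂ : Compacts Θ, lam (K₁ ⊔ K₂) ≤ lam K₁ + lam K₂ := by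
    intro K₁ K₂
    have e₁ : lam K₁ = ⨅ p : {F : Finset ℕ // (K₁ : Set Θ) ⊆ u F}, α p.1 := by
      rw [hlam]; exact (iInf_subtype'' _ _).symm
    have e₂ : lam K₂ = ⨅ p : {F : Finset ℕ // (K₂ : Set Θ) ⊆ u F}, α p.1 := by
      rw [hlam]; exact (iInf_subtype'' _ _).symm
    rw [e₁, e₂, ENNReal.iInf_add]
    refine le_iInf fun p => ?_
    rw [ENNReal.add_iInf]
    refine le_iInf fun q => ?_
    refine (hlam_le (K₁ ⊔ K₂) (p.1 ∪ q.1) ?_).trans (hαsub p.1 q.1)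
    rw [hu_union, Compacts.coe_sup]
    exact union_subset_union p.2 q.2
  have hlam_sup_disj : ∀ K₁ K₂ : Compacts Θ, Disjoint (K₁ : Set Θ) (K₂ : Set Θ) →
      lam (K₁ ⊔ K₂) = lam K₁ + lam K₂ := by
    intro K₁ K₂ hd
    refine le_antisymm (hlam_sup_le K₁ K₂) ?_
    obtain ⟨V₁, V₂, hV₁, hV₂, hKV₁, hKV₂, hVd⟩ :=
      SeparatedNhds.of_isCompact_isCompact K₁.isCompact K₂.isCompact hd
    refine le_iInf₂ fun F hF => ?_
    have hsub : (K₁ : Set Θ) ∪ (K₂ : Set Θ) ⊆ u F := by rwa [← Compacts.coe_sup]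
    obtain ⟨F₁, hF₁, hF₁'⟩ := key K₁ K₁.isCompact (V₁ ∩ u F) (hV₁.inter (hu_open F))
      (subset_inter hKV₁ (subset_union_left.trans hsub))
    obtain ⟨F₂, hF₂, hF₂'⟩ := key K₂ K₂.isCompact (V₂ ∩ u F) (hV₂.inter (hu_open F))
      (subset_inter hKV₂ (subset_union_right.trans hsub))
    have hdisj : Disjoint (u F₁) (u F₂) :=
      hVd.mono (hF₁'.trans inter_subset_left) (hF₂'.trans inter_subset_left)
    calc lam K₁ + lam K₂ ≤ α F₁ + α F₂ :=
          add_le_add (hlam_le K₁ F₁ hF₁) (hlam_le K₂ F₂ hF₂)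
      _ = α (F₁ ∪ F₂) := (hαadd F₁ F₂ hdisj).symm
      _ ≤ α F := by
          refine hαmono _ _ ?_
          rw [hu_union]
          exact union_subset (hF₁'.trans inter_subset_right) (hF₂'.trans inter_subset_right)
  let μc : Content Θ :=
    { toFun := fun Kc => (lam Kc).toNNReal
      mono' := fun K₁ K₂ h => ENNReal.toNNReal_mono (hlam_ne_top K₂) (hlam_mono K₁ K₂ h)
      sup_disjoint' := fun K₁ K₂ hd _ _ => by
        show (lam (K₁ ⊔ K₂)).toNNReal = (lam K₁).toNNReal + (lam K₂).toNNReal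
        rw [hlam_sup_disj K₁ K₂ hd, ENNReal.toNNReal_add (hlam_ne_top K₁) (hlam_ne_top K₂)]
      sup_le' := fun K₁ K₂ => by
        show (lam (K₁ ⊔ K₂)).toNNReal ≤ (lam K₁).toNNReal + (lam K₂).toNNReal
        have h : (lam (K₁ ⊔ K₂)).toNNReal ≤ (lam K₁ + lam K₂).toNNReal :=
          ENNReal.toNNReal_mono
            (by simp [ENNReal.add_eq_top, hlam_ne_top K₁, hlam_ne_top K₂]) (hlam_sup_le K₁ K₂)
        rwa [ENNReal.toNNReal_add (hlam_ne_top K₁) (hlam_ne_top K₂)] at h }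
  have hμc_coe : ∀ Kc : Compacts Θ, (μc Kc : ℝ≥0∞) = lam Kc := fun Kc =>
    ENNReal.coe_toNNReal (hlam_ne_top Kc)
  set μM : Measure Θ := μc.measure with hμM
  have hopen_eval : ∀ (G : Set Θ), IsOpen G →
      μM G = ⨆ (Kc : Compacts Θ) (_ : (Kc : Set Θ) ⊆ G), lam Kc := by
    intro G hG
    rw [hμM, μc.measure_apply hG.measurableSet,
      μc.outerMeasure_of_isOpen G hG]
    simp only [Content.innerContent]
    exact iSup_congr fun Kc => iSup_congr fun _ => hμc_coe Kc
  have hliminf : ∀ (G : Set Θ), IsOpen G →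
      μM G ≤ atTop.liminf (fun k => (Q (φ k) : Measure Θ) G) := by
    intro G hG
    rw [hopen_eval G hG]
    refine iSup₂_le fun Kc hKc => ?_
    obtain ⟨F, hF₁, hF₂⟩ := key Kc Kc.isCompact G hG hKc
    refine (hlam_le Kc F hF₁).trans ?_
    rw [show α F = atTop.liminf (fun k => (Q (φ k) : Measure Θ) (u F)) from ((hα F).liminf_eq).symm]
    exact liminf_le_liminf (Eventually.of_forall fun k => measure_mono hF₂)
  have huniv : μM univ = 1 := by
    have hle : μM univ ≤ 1 := by
      rw [hopen_eval univ isOpen_univ]; exact iSup₂_le fun Kc _ => hlam_one Kc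
    refine le_antisymm hle ?_
    have hKm : ∀ m, (1 : ℝ≥0∞) - ε m ≤ μM univ := by
      intro m
      have h1 : (1 : ℝ≥0∞) - ε m ≤ lam ⟨K m, hK m⟩ := by
        refine le_iInf₂ fun F hF => ?_
        refine tsub_le_iff_right.mpr ?_
        refine ge_of_tendsto ((hα F).add (tendsto_const_nhds (x := ε m)))
          (Eventually.of_forall fun k => ?_)
        calc (1 : ℝ≥0∞) = (Q (φ k) : Measure Θ) (K m) + (Q (φ k) : Measure Θ) (K m)ᶜ := by
              rw [measure_add_measure_compl ((hK m).isClosed.measurableSet), measure_univ]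
          _ ≤ (Q (φ k) : Measure Θ) (u F) + ε m :=
              add_le_add (measure_mono hF) (htight (φ k) m)
      refine h1.trans ?_
      rw [hopen_eval univ isOpen_univ]
      exact le_iSup₂ (f := fun (Kc : Compacts Θ) (_ : (Kc : Set Θ) ⊆ univ) => lam Kc)
        ⟨K m, hK m⟩ (subset_univ _)
    have hlim : Tendsto (fun m => (1 : ℝ≥0∞) - ε m) atTop (𝓝 1) := by
      have := ENNReal.Tendsto.sub (tendsto_const_nhds (x := (1:ℝ≥0∞))) hε (Or.inl ENNReal.one_ne_top)
      simpa using this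
    exact le_of_tendsto hlim (Eventually.of_forall hKm)
  have hprob : IsProbabilityMeasure μM := ⟨huniv⟩
  refine ⟨⟨μM, hprob⟩, φ, hφ, ?_, hliminf⟩
  refine MeasureTheory.tendsto_of_forall_isOpen_le_liminf fun G hG => ?_
  have hENN := hliminf G hG
  have aux : (ENNReal.ofNNReal (atTop.liminf fun k => Q (φ k) G)) =
      atTop.liminf (fun k => ((Q (φ k) G : ℝ≥0) : ℝ≥0∞)) := by
    refine Monotone.map_liminf_of_continuousAt (F := atTop) ENNReal.coe_mono
      (fun k => Q (φ k) G) ?_ ?_ ?_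
    · exact ENNReal.continuous_coe.continuousAt
    · exact IsBoundedUnder.isCoboundedUnder_ge ⟨1, by simp [ProbabilityMeasure.apply_le_one]⟩
    · exact ⟨0, by simp⟩
  rw [← ENNReal.coe_le_coe, aux]
  simp only [ProbabilityMeasure.ennreal_coeFn_eq_coeFn_toMeasure]
  exact (ProbabilityMeasure.ennreal_coeFn_eq_coeFn_toMeasure ⟨μM, hprob⟩ G).trans_le hENN
lemma GVI.le_liminf_add' {u v : ℕ → ℝ≥0∞} :
    atTop.liminf u + atTop.liminf v ≤ atTop.liminf (fun k => u k + v k) := by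
  have key : ∀ a b : ℝ≥0∞, a < atTop.liminf u → b < atTop.liminf v →
      a + b ≤ atTop.liminf (fun k => u k + v k) := by
    intro a b ha hb
    have hau : ∀ᶠ k in atTop, a < u k := eventually_lt_of_lt_liminf ha
    have hbv : ∀ᶠ k in atTop, b < v k := eventually_lt_of_lt_liminf hb
    refine le_liminf_of_le (by isBoundedDefault) ?_
    exact (hau.and hbv).mono fun k hk => add_le_add hk.1.le hk.2.le
  rcases eq_or_ne (atTop.liminf u) 0 with hx | hx
  · rw [hx, zero_add]
    exact liminf_le_liminf (Eventually.of_forall fun k => le_add_self)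
  rcases eq_or_ne (atTop.liminf v) 0 with hy | hy
  · rw [hy, add_zero]
    exact liminf_le_liminf (Eventually.of_forall fun k => le_self_add)
  by_contra hlt
  push_neg at hlt
  obtain ⟨a, ha, b, hb, hab⟩ := ENNReal.exists_lt_add_of_lt_add hlt hx hy
  exact absurd (key a b ha hb) (not_le.mpr hab)

lemma GVI.ecoe {x : ℝ≥0∞} (hx : x ≠ ⊤) : (x : EReal) = ((x.toReal : ℝ) : EReal) := by
  rw [← EReal.toReal_coe_ennreal, EReal.coe_toReal] <;>
    simp [EReal.coe_ennreal_eq_top_iff, hx]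

lemma GVI.J_eq {Θ : Type*} [MeasurableSpace Θ] (L : Θ → ℝ) (hL : Measurable L) {b : ℝ}
    (hb0 : b ≤ 0) (hb : ∀ θ, b ≤ L θ) (ν : Measure Θ) [IsProbabilityMeasure ν] :
    J L ν = ((∫⁻ θ, ENNReal.ofReal (L θ - b) ∂ν : ℝ≥0∞) : EReal) + (b : EReal) := by
  set A := ∫⁻ θ, ENNReal.ofReal (L θ) ∂ν with hA_def
  set B := ∫⁻ θ, ENNReal.ofReal (-L θ) ∂ν with hB_def
  set β₀ := ENNReal.ofReal (-b) with hβ₀_def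
  have hBle : B ≤ β₀ := by
    calc B ≤ ∫⁻ _, β₀ ∂ν :=
          lintegral_mono fun θ => ENNReal.ofReal_le_ofReal (by linarith [hb θ])
      _ = β₀ := by simp
  have hBtop : B ≠ ⊤ := (hBle.trans_lt ENNReal.ofReal_lt_top).ne
  have hpoint : ∀ θ, ENNReal.ofReal (L θ - b) =
      ENNReal.ofReal (L θ) + (β₀ - ENNReal.ofReal (-L θ)) := by
    intro θ
    rcases le_or_gt 0 (L θ) with h | h
    · rw [show L θ - b = L θ + -b by ring, ENNReal.ofReal_add h (by linarith),
        ENNReal.ofReal_of_nonpos (by linarith : -L θ ≤ 0), tsub_zero]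
    · rw [ENNReal.ofReal_of_nonpos h.le, zero_add,
        show L θ - b = -b - -L θ by ring, ENNReal.ofReal_sub _ (by linarith)]
  have hC : ∫⁻ θ, ENNReal.ofReal (L θ - b) ∂ν = A + (β₀ - B) := by
    simp_rw [hpoint]
    rw [lintegral_add_left hL.ennreal_ofReal]
    congr 1
    rw [lintegral_sub (f := fun _ => β₀) (g := fun θ => ENNReal.ofReal (-L θ)) hL.neg.ennreal_ofReal hBtop
      (Filter.Eventually.of_forall fun θ => ENNReal.ofReal_le_ofReal (by linarith [hb θ]))]
    simp
    rfl
  rw [J, hC, ← hA_def, ← hB_def]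
  rcases eq_or_ne A ⊤ with hA | hA
  · rw [hA, GVI.ecoe hBtop]
    rw [show ((⊤ : ℝ≥0∞) + (β₀ - B)) = ⊤ by simp]
    rw [EReal.coe_ennreal_top, EReal.top_sub_coe, EReal.top_add_coe]
  · have hβ₀B : β₀ - B ≠ ⊤ := (tsub_le_self.trans_lt ENNReal.ofReal_lt_top).ne
    have hsum : A + (β₀ - B) ≠ ⊤ := ENNReal.add_ne_top.mpr ⟨hA, hβ₀B⟩
    rw [GVI.ecoe hA, GVI.ecoe hBtop, GVI.ecoe hsum, ← EReal.coe_sub, ← EReal.coe_add,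
      EReal.coe_eq_coe_iff]
    rw [ENNReal.toReal_add hA hβ₀B, ENNReal.toReal_sub_of_le hBle ENNReal.ofReal_ne_top,
      hβ₀_def, ENNReal.toReal_ofReal (by linarith)]
    ring

lemma GVI.T_eq {Θ : Type*} [MeasurableSpace Θ] (n : ℕ) (hn : 1 ≤ n) {β : ℝ} (hβ : 0 < β)
    (L : Θ → ℝ) (hL : Measurable L) {b : ℝ} (hb0 : b ≤ 0) (hb : ∀ θ, b ≤ L θ)
    (D : ProbabilityMeasure Θ → ProbabilityMeasure Θ → ℝ) (hD : ∀ P Q, 0 ≤ D P Q)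
    (Pr Q : ProbabilityMeasure Θ) :
    T n β L D Pr Q =
      (((∫⁻ θ, ENNReal.ofReal ((n : ℝ) * (L θ - b)) ∂(Q : Measure Θ)) +
        ENNReal.ofReal (1 / β * D Q Pr) : ℝ≥0∞) : EReal) + ((n * b : ℝ) : EReal) := by
  have hd : 0 ≤ 1 / β * D Q Pr := mul_nonneg (by positivity) (hD Q Pr)
  set CQ := ∫⁻ θ, ENNReal.ofReal (L θ - b) ∂(Q : Measure Θ) with hCQ_def
  have hscale : ∫⁻ θ, ENNReal.ofReal ((n : ℝ) * (L θ - b)) ∂(Q : Measure Θ) =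
      (n : ℝ≥0∞) * CQ := by
    simp_rw [ENNReal.ofReal_mul (by positivity : (0:ℝ) ≤ (n:ℝ)), ENNReal.ofReal_natCast]
    exact lintegral_const_mul _ (hL.sub measurable_const).ennreal_ofReal
  rw [T, GVI.J_eq L hL hb0 hb (Q : Measure Θ), hscale, ← hCQ_def]
  rcases eq_or_ne CQ ⊤ with hCQ | hCQ
  · have hn0 : (n : ℝ≥0∞) ≠ 0 := Nat.cast_ne_zero.mpr (by omega)
    have h1 : (n : ℝ≥0∞) * CQ = ⊤ := by rw [hCQ]; exact ENNReal.mul_top hn0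
    have h2 : (n : ℝ≥0∞) * CQ + ENNReal.ofReal (1 / β * D Q Pr) = ⊤ := by rw [h1]; simp
    have hpos : (0:EReal) < ((n:ℝ) : EReal) := by exact_mod_cast Nat.cast_pos.mpr (by omega)
    rw [h2, hCQ, EReal.coe_ennreal_top, EReal.top_add_coe, EReal.mul_top_of_pos hpos,
      EReal.top_add_coe, EReal.top_add_coe]
  · have hnCQ : (n : ℝ≥0∞) * CQ ≠ ⊤ :=
      ENNReal.mul_ne_top (ENNReal.natCast_ne_top n) hCQ
    have hsum : (n : ℝ≥0∞) * CQ + ENNReal.ofReal (1 / β * D Q Pr) ≠ ⊤ :=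
      ENNReal.add_ne_top.mpr ⟨hnCQ, ENNReal.ofReal_ne_top⟩
    rw [GVI.ecoe hCQ, GVI.ecoe hsum, ← EReal.coe_add, ← EReal.coe_mul, ← EReal.coe_add,
      ← EReal.coe_add, EReal.coe_eq_coe_iff]
    rw [ENNReal.toReal_add hnCQ ENNReal.ofReal_ne_top, ENNReal.toReal_mul,
      (by simp : ((n:ℝ≥0∞)).toReal = (n:ℝ)), ENNReal.toReal_ofReal hd]
    ring
end GVIAux

/-- Existence of a GVI posterior: under a lower bounded, lsc, coercive loss,
weak*-closed `𝒬`, a divergence lower semicontinuous in its first argument and bounded by `M`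
on `𝒬`, an empirical loss minimiser in `𝒬`, and some element of finite objective,
there exists a minimiser of `T_n` over `𝒬`. -/
theorem gvi_posterior_exists {Θ : Type*} [TopologicalSpace Θ] [PolishSpace Θ] [MeasurableSpace Θ]
    [BorelSpace Θ]
    (L : Θ → ℝ) (hLmeas : Measurable L) (hLbdd : ∃ b : ℝ, ∀ θ, b ≤ L θ)
    (hLlsc : LowerSemicontinuous L) (hLcoer : Coercive L)
    (𝒬 : Set (ProbabilityMeasure Θ)) (h𝒬 : IsClosed 𝒬)
    (D : ProbabilityMeasure Θ → ProbabilityMeasure Θ → ℝ)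
    (hDnn : ∀ P Q : ProbabilityMeasure Θ, 0 ≤ D P Q)
    (hDlsc : ∀ P : ProbabilityMeasure Θ, LowerSemicontinuous fun Q => D Q P)
    (Pr : ProbabilityMeasure Θ)
    (M β : ℝ) (hM : 0 < M) (hβ : 0 < β) (n : ℕ) (hn : 1 ≤ n)
    (hDbdd : ∀ Q ∈ 𝒬, D Q Pr ≤ M)
    (Pstar : ProbabilityMeasure Θ) (hPstar𝒬 : Pstar ∈ 𝒬)
    (hPstar : ∀ Q ∈ 𝒬, J L (Pstar : Measure Θ) ≤ J L (Q : Measure Θ))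
    (hfin : ∃ Q ∈ 𝒬, T n β L D Pr Q < (⊤ : EReal)) :
    ∃ Qn ∈ 𝒬, ∀ Q ∈ 𝒬, T n β L D Pr Qn ≤ T n β L D Pr Q := by
  classical
  obtain ⟨b₀, hb₀⟩ := hLbdd
  set b : ℝ := min b₀ 0 with hb_def
  have hb0 : b ≤ 0 := min_le_right _ _
  have hb : ∀ θ, b ≤ L θ := fun θ => (min_le_left _ _).trans (hb₀ θ)
  set f : Θ → ℝ := fun θ => (n : ℝ) * (L θ - b) with hf_def
  have f_meas : Measurable f := (hLmeas.sub measurable_const).const_mul _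
  have f_nn : 0 ≤ f := fun θ => mul_nonneg (by positivity) (by linarith [hb θ])
  have f_lsc : LowerSemicontinuous f := by
    have hmono : Monotone (fun x : ℝ => (n : ℝ) * (x - b)) := fun x y hxy =>
      mul_le_mul_of_nonneg_left (sub_le_sub_right hxy b) (by positivity)
    have hcont : Continuous (fun x : ℝ => (n : ℝ) * (x - b)) :=
      continuous_const.mul (continuous_id.sub continuous_const)
    exact Continuous.comp_lowerSemicontinuous (g := fun x : ℝ => (n : ℝ) * (x - b)) hcont
      hLlsc hmono
  set Cf : ProbabilityMeasure Θ → ℝ≥0∞ :=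
    fun Q => ∫⁻ θ, ENNReal.ofReal ((n : ℝ) * (L θ - b)) ∂(Q : Measure Θ) with hCf_def
  set Hf : ProbabilityMeasure Θ → ℝ≥0∞ :=
    fun Q => Cf Q + ENNReal.ofReal (1 / β * D Q Pr) with hHf_def
  have hT : ∀ Q : ProbabilityMeasure Θ,
      T n β L D Pr Q = ((Hf Q : ℝ≥0∞) : EReal) + ((n * b : ℝ) : EReal) := fun Q =>
    GVI.T_eq n hn hβ L hLmeas hb0 hb D hDnn Pr Q
  obtain ⟨Q₀, hQ₀Q, hQ₀fin⟩ := hfin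
  have hHQ₀ : Hf Q₀ ≠ ⊤ := by
    intro htop
    rw [hT Q₀, htop, EReal.coe_ennreal_top, EReal.top_add_coe] at hQ₀fin
    exact lt_irrefl _ hQ₀fin
  have hQ₀S : Q₀ ∈ {Q | Q ∈ 𝒬 ∧ Cf Q ≤ Hf Q₀} := ⟨hQ₀Q, le_self_add⟩
  set S : Set (ProbabilityMeasure Θ) := {Q | Q ∈ 𝒬 ∧ Cf Q ≤ Hf Q₀} with hS_def
  set h : ℝ≥0∞ := ⨅ (Q : ProbabilityMeasure Θ) (_ : Q ∈ S), Hf Q with hh_def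
  have h_le : ∀ Q ∈ S, h ≤ Hf Q := fun Q hQ => iInf₂_le Q hQ
  have h_top : h ≠ ⊤ := by
    intro htop
    have := h_le Q₀ hQ₀S
    rw [htop] at this
    exact hHQ₀ (top_le_iff.mp this)
  have hpick : ∀ k : ℕ, ∃ Q, Q ∈ S ∧ Hf Q < h + 1 / ((k : ℝ≥0∞) + 1) := by
    intro k
    have hlt : h < h + 1 / ((k : ℝ≥0∞) + 1) :=
      ENNReal.lt_add_right h_top (by simp)
    conv_lhs at hlt => rw [hh_def]
    obtain ⟨Q, hQ⟩ := iInf_lt_iff.mp hlt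
    obtain ⟨hQS, hQlt⟩ := iInf_lt_iff.mp hQ
    exact ⟨Q, hQS, hQlt⟩
  choose Qs hQsS hQslt using hpick
  choose Kc hKcomp hKgt using fun m : ℕ => hLcoer ((m : ℝ) + 1 + b)
  have hRtop : Hf Q₀ + 1 ≠ ⊤ := ENNReal.add_ne_top.mpr ⟨hHQ₀, ENNReal.one_ne_top⟩
  have htight : ∀ k m : ℕ,
      (Qs k : Measure Θ) (Kc m)ᶜ ≤ (Hf Q₀ + 1) / ((m : ℝ≥0∞) + 1) := by
    intro k m
    have hmeas : MeasurableSet (Kc m)ᶜ := (hKcomp m).isClosed.measurableSet.compl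
    have hmark : ((m : ℝ≥0∞) + 1) * (Qs k : Measure Θ) (Kc m)ᶜ ≤ Cf (Qs k) := by
      calc ((m : ℝ≥0∞) + 1) * (Qs k : Measure Θ) (Kc m)ᶜ
          = ∫⁻ _ in (Kc m)ᶜ, ((m : ℝ≥0∞) + 1) ∂(Qs k : Measure Θ) := by
            rw [setLIntegral_const]
        _ ≤ ∫⁻ θ in (Kc m)ᶜ, ENNReal.ofReal ((n : ℝ) * (L θ - b)) ∂(Qs k : Measure Θ) := by
            refine setLIntegral_mono' hmeas fun θ hθ => ?_
            have h1 : (m : ℝ) + 1 ≤ (n : ℝ) * (L θ - b) := by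
              have h2 := hKgt m θ hθ
              have h3 : (m : ℝ) + 1 ≤ L θ - b := by linarith
              calc (m : ℝ) + 1 ≤ L θ - b := h3
                _ ≤ (n : ℝ) * (L θ - b) :=
                  le_mul_of_one_le_left (by linarith) (by exact_mod_cast hn)
            calc (m : ℝ≥0∞) + 1 = ENNReal.ofReal ((m : ℝ) + 1) := by
                  rw [ENNReal.ofReal_add (by positivity) zero_le_one, ENNReal.ofReal_natCast,
                    ENNReal.ofReal_one]
              _ ≤ ENNReal.ofReal ((n : ℝ) * (L θ - b)) := ENNReal.ofReal_le_ofReal h1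
        _ ≤ Cf (Qs k) := setLIntegral_le_lintegral _ _
    have hle : (Qs k : Measure Θ) (Kc m)ᶜ * ((m : ℝ≥0∞) + 1) ≤ Hf Q₀ + 1 := by
      rw [mul_comm]
      exact hmark.trans ((hQsS k).2.trans le_self_add)
    exact (ENNReal.le_div_iff_mul_le (Or.inl (by simp)) (Or.inl (by simp))).mpr hle
  obtain ⟨P, φ, hφ, htend, hopens⟩ := GVI.prokhorov_seq Qs Kc hKcomp
    (fun m => (Hf Q₀ + 1) / ((m : ℝ≥0∞) + 1)) (GVI.tendsto_div_nat hRtop) htight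
  have hP𝒬 : P ∈ 𝒬 := h𝒬.mem_of_tendsto htend (Eventually.of_forall fun k => (hQsS (φ k)).1)
  have hCP : Cf P ≤ atTop.liminf fun k => Cf (Qs (φ k)) :=
    GVI.lintegral_le_liminf_of_lsc f_meas f_lsc f_nn hopens
  have hCPR : Cf P ≤ Hf Q₀ := by
    refine hCP.trans ?_
    have h1 : atTop.liminf (fun k => Cf (Qs (φ k))) ≤ atTop.liminf (fun _ : ℕ => Hf Q₀) :=
      liminf_le_liminf (Eventually.of_forall fun k => (hQsS (φ k)).2)
    simpa using h1
  have hPS : P ∈ S := ⟨hP𝒬, hCPR⟩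
  have hDlsc' : LowerSemicontinuous fun Q : ProbabilityMeasure Θ =>
      ENNReal.ofReal (1 / β * D Q Pr) := by
    have hcont : Continuous fun x : ℝ => ENNReal.ofReal (1 / β * x) :=
      ENNReal.continuous_ofReal.comp (continuous_const.mul continuous_id)
    have hmono : Monotone fun x : ℝ => ENNReal.ofReal (1 / β * x) := fun x y hxy =>
      ENNReal.ofReal_le_ofReal (mul_le_mul_of_nonneg_left hxy (by positivity))
    exact Continuous.comp_lowerSemicontinuous (g := fun x : ℝ => ENNReal.ofReal (1 / β * x))
      (f := fun Q : ProbabilityMeasure Θ => D Q Pr) hcont (hDlsc Pr) hmono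
  have hDP : ENNReal.ofReal (1 / β * D P Pr) ≤
      atTop.liminf fun k => ENNReal.ofReal (1 / β * D (Qs (φ k)) Pr) :=
    GVI.lsc_le_liminf hDlsc' htend
  have hHP : Hf P ≤ h := by
    have hadd : (atTop.liminf fun k => Cf (Qs (φ k))) +
        (atTop.liminf fun k => ENNReal.ofReal (1 / β * D (Qs (φ k)) Pr)) ≤
        atTop.liminf fun k => Hf (Qs (φ k)) :=
      GVI.le_liminf_add'
    have hbound : (atTop.liminf fun k => Hf (Qs (φ k))) ≤ h := by
      have hev : ∀ k : ℕ, Hf (Qs (φ k)) ≤ h + 1 / ((k : ℝ≥0∞) + 1) := by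
        intro k
        refine (hQslt (φ k)).le.trans (add_le_add_right ?_ h)
        refine ENNReal.div_le_div le_rfl ?_
        have : (k : ℝ≥0∞) ≤ (φ k : ℝ≥0∞) := by exact_mod_cast hφ.le_apply
        exact add_le_add_left this 1
      have hlim : Tendsto (fun k : ℕ => h + 1 / ((k : ℝ≥0∞) + 1)) atTop (𝓝 h) := by
        have h0 := GVI.tendsto_div_nat (a := (1 : ℝ≥0∞)) ENNReal.one_ne_top
        have h1 := Tendsto.add (tendsto_const_nhds (x := h)) h0
        simpa using h1
      calc atTop.liminf (fun k => Hf (Qs (φ k)))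
          ≤ atTop.liminf (fun k : ℕ => h + 1 / ((k : ℝ≥0∞) + 1)) :=
            liminf_le_liminf (Eventually.of_forall hev)
        _ = h := hlim.liminf_eq
    calc Hf P ≤ (atTop.liminf fun k => Cf (Qs (φ k))) +
          (atTop.liminf fun k => ENNReal.ofReal (1 / β * D (Qs (φ k)) Pr)) :=
          add_le_add hCP hDP
      _ ≤ atTop.liminf fun k => Hf (Qs (φ k)) := hadd
      _ ≤ h := hbound
  refine ⟨P, hP𝒬, fun Q' hQ' => ?_⟩
  rw [hT P, hT Q']
  refine add_le_add ?_ le_rfl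
  rw [EReal.coe_ennreal_le_coe_ennreal_iff]
  by_cases hc : Cf Q' ≤ Hf Q₀
  · exact hHP.trans (h_le Q' ⟨hQ', hc⟩)
  · calc Hf P ≤ h := hHP
      _ ≤ Hf Q₀ := h_le Q₀ hQ₀S
      _ ≤ Cf Q' := (not_le.mp hc).le
      _ ≤ Hf Q' := le_self_add
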